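/- Let G be a graph on n vertices with adjacency matrix A, k ≤ n, λ = (k−1)/2, and μ = k. If x* minimizes (1/2)xᵀAx over binary vectors of cardinality k, then (1/2)x*ᵀAx* < (1/2)xᵀAx + λ(k − eᵀx) + (μ/2)(eᵀx − k)² for every x ∈ {0,1}ⁿ with eᵀx ≠ k. Consequently, every minimizer of the augmented Lagrangian objective (1/2)xᵀAx + λ(k − eᵀx) + (μ/2)(eᵀx − k)² over {0,1}ⁿ has cardinality exactly k and minimizes (1/2)xᵀAx among binary vectors of cardinality k. -/

import Mathlib

open Matrix BigOperators Finset

section Aux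

variable {n : ℕ} (A : Matrix (Fin n) (Fin n) ℝ)

def Qf (S : Finset (Fin n)) : ℝ := ∑ i ∈ S, ∑ j ∈ S, A i j

def indv (S : Finset (Fin n)) : Fin n → ℝ := fun i => if i ∈ S then 1 else 0

lemma indv_binary (S : Finset (Fin n)) : ∀ i, indv S i = 0 ∨ indv S i = 1 := by
  intro i; unfold indv; by_cases h : i ∈ S <;> simp [h]

lemma indv_sum (S : Finset (Fin n)) : (∑ i, indv S i) = (S.card : ℝ) := by
  unfold indv
  rw [Finset.sum_ite_mem]
  simp

lemma quad_eq (x : Fin n → ℝ) (S : Finset (Fin n)) (hx : ∀ i, x i = if i ∈ S then 1 else 0) :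
    x ⬝ᵥ A.mulVec x = Qf A S := by
  unfold Qf dotProduct mulVec dotProduct
  have key : ∀ i, x i * (∑ j, A i j * x j) = if i ∈ S then ∑ j ∈ S, A i j else 0 := by
    intro i
    have hinner : (∑ j, A i j * x j) = ∑ j ∈ S, A i j := by
      have h2 : ∀ j, A i j * x j = if j ∈ S then A i j else 0 := by
        intro j; rw [hx j]; by_cases h : j ∈ S <;> simp [h]
      rw [Finset.sum_congr rfl (fun j _ => h2 j), Finset.sum_ite_mem]
      simp
    rw [hx i, hinner]
    by_cases h : i ∈ S <;> simp [h]
  rw [Finset.sum_congr rfl (fun i _ => key i), Finset.sum_ite_mem]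
  simp

lemma binary_support (x : Fin n → ℝ) (hx : ∀ i, x i = 0 ∨ x i = 1) :
    ∀ i, x i = if i ∈ Finset.univ.filter (fun i => x i = 1) then 1 else 0 := by
  intro i
  rcases hx i with h | h <;> by_cases hm : i ∈ Finset.univ.filter (fun i => x i = 1) <;>
    simp_all

lemma A_nonneg (h01 : ∀ i j, A i j = 0 ∨ A i j = 1) : ∀ i j, 0 ≤ A i j := by
  intro i j; rcases h01 i j with h | h <;> simp [h]

lemma Qf_mono (h01 : ∀ i j, A i j = 0 ∨ A i j = 1) {S T : Finset (Fin n)} (h : S ⊆ T) : Qf A S ≤ Qf A T := by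
  unfold Qf
  calc ∑ i ∈ S, ∑ j ∈ S, A i j ≤ ∑ i ∈ S, ∑ j ∈ T, A i j := by
        apply Finset.sum_le_sum
        intro i _
        exact Finset.sum_le_sum_of_subset_of_nonneg h (fun j _ _ => A_nonneg A h01 i j)
    _ ≤ ∑ i ∈ T, ∑ j ∈ T, A i j := by
        apply Finset.sum_le_sum_of_subset_of_nonneg h
        intro i _ _
        exact Finset.sum_nonneg (fun j _ => A_nonneg A h01 i j)

lemma Qf_insert (hdiag : ∀ i, A i i = 0) (hsymm : A.IsSymm) {S : Finset (Fin n)} {a : Fin n} (ha : a ∉ S) :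
    Qf A (insert a S) = Qf A S + 2 * ∑ j ∈ S, A a j := by
  unfold Qf
  rw [Finset.sum_insert ha]
  have h1 : ∑ j ∈ insert a S, A a j = ∑ j ∈ S, A a j := by
    rw [Finset.sum_insert ha, hdiag a]; ring
  have h2 : ∀ i ∈ S, ∑ j ∈ insert a S, A i j = A a i + ∑ j ∈ S, A i j := by
    intro i _
    rw [Finset.sum_insert ha]
    have hsym : A i a = A a i := congrFun (congrFun hsymm a) i
    rw [hsym]
  rw [h1, Finset.sum_congr rfl h2, Finset.sum_add_distrib]
  ring

lemma row_sum_le (h01 : ∀ i j, A i j = 0 ∨ A i j = 1) (a : Fin n) (S : Finset (Fin n)) : ∑ j ∈ S, A a j ≤ (S.card : ℝ) := by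
  calc ∑ j ∈ S, A a j ≤ ∑ _j ∈ S, (1 : ℝ) := by
        apply Finset.sum_le_sum
        intro j _
        rcases h01 a j with h | h <;> simp [h]
    _ = (S.card : ℝ) := by simp

lemma Qf_extend (h01 : ∀ i j, A i j = 0 ∨ A i j = 1) (hdiag : ∀ i, A i i = 0) (hsymm : A.IsSymm) : ∀ (d : ℕ) (S : Finset (Fin n)) (k : ℕ), k ≤ n → S.card + d = k →
    ∃ T : Finset (Fin n), T.card = k ∧
      Qf A T ≤ Qf A S + ((k : ℝ) * ((k : ℝ) - 1) - (S.card : ℝ) * ((S.card : ℝ) - 1)) := by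
  intro d
  induction d with
  | zero =>
    intro S k _ hcard
    refine ⟨S, by omega, ?_⟩
    have hks : (k : ℝ) = (S.card : ℝ) := by exact_mod_cast congrArg Nat.cast (by omega : k = S.card)
    rw [hks]
    ring_nf
    exact le_refl _
  | succ d ih =>
    intro S k hkn hcard
    have hlt : S.card < n := by omega
    have hne : Sᶜ.Nonempty := by
      rw [← Finset.card_pos, Finset.card_compl]
      simp only [Fintype.card_fin]
      omega
    obtain ⟨a, haS⟩ := hne
    rw [Finset.mem_compl] at haS
    obtain ⟨T, hTcard, hTQ⟩ := ih (insert a S) k hkn (by rw [Finset.card_insert_of_notMem haS]; omega)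
    refine ⟨T, hTcard, ?_⟩
    rw [Qf_insert A hdiag hsymm haS] at hTQ
    have hrow := row_sum_le A h01 a S
    have hci : ((insert a S).card : ℝ) = (S.card : ℝ) + 1 := by
      rw [Finset.card_insert_of_notMem haS]; push_cast; ring
    rw [hci] at hTQ
    nlinarith [hTQ, hrow]

end Aux

theorem stmt_19 {n : ℕ} (A : Matrix (Fin n) (Fin n) ℝ)
    (hsymm : A.IsSymm) (h01 : ∀ i j, A i j = 0 ∨ A i j = 1) (hdiag : ∀ i, A i i = 0)
    (k : ℕ) (hk1 : 1 ≤ k) (hk : k ≤ n)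
    (lam μ : ℝ) (hlam : lam = ((k : ℝ) - 1) / 2) (hμ : μ = (k : ℝ))
    (xstar : Fin n → ℝ) (hxstar : ∀ i, xstar i = 0 ∨ xstar i = 1)
    (hxstarcard : (∑ i, xstar i) = (k : ℝ))
    (hxstaropt : ∀ x : Fin n → ℝ, (∀ i, x i = 0 ∨ x i = 1) → (∑ i, x i) = (k : ℝ) →
      (1 / 2) * (xstar ⬝ᵥ A.mulVec xstar) ≤ (1 / 2) * (x ⬝ᵥ A.mulVec x)) :
    (∀ x : Fin n → ℝ, (∀ i, x i = 0 ∨ x i = 1) → (∑ i, x i) ≠ (k : ℝ) →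
      (1 / 2) * (xstar ⬝ᵥ A.mulVec xstar) <
        (1 / 2) * (x ⬝ᵥ A.mulVec x) + lam * ((k : ℝ) - ∑ i, x i) +
          μ / 2 * ((∑ i, x i) - k) ^ 2) ∧
    (∀ y : Fin n → ℝ, (∀ i, y i = 0 ∨ y i = 1) →
      (∀ x : Fin n → ℝ, (∀ i, x i = 0 ∨ x i = 1) →
        (1 / 2) * (y ⬝ᵥ A.mulVec y) + lam * ((k : ℝ) - ∑ i, y i) +
            μ / 2 * ((∑ i, y i) - k) ^ 2 ≤
          (1 / 2) * (x ⬝ᵥ A.mulVec x) + lam * ((k : ℝ) - ∑ i, x i) +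
            μ / 2 * ((∑ i, x i) - k) ^ 2) →
      (∑ i, y i) = (k : ℝ) ∧
        ∀ x : Fin n → ℝ, (∀ i, x i = 0 ∨ x i = 1) → (∑ i, x i) = (k : ℝ) →
          (1 / 2) * (y ⬝ᵥ A.mulVec y) ≤ (1 / 2) * (x ⬝ᵥ A.mulVec x)) := by
  -- For any finset T of cardinality k, m* ≤ (1/2) Qf A T
  have hopt : ∀ T : Finset (Fin n), T.card = k →
      (1 / 2) * (xstar ⬝ᵥ A.mulVec xstar) ≤ (1 / 2) * Qf A T := by
    intro T hT
    have := hxstaropt (indv T) (indv_binary T) (by rw [indv_sum, hT])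
    rwa [quad_eq A (indv T) T (fun i => rfl)] at this
  have part1 : ∀ x : Fin n → ℝ, (∀ i, x i = 0 ∨ x i = 1) → (∑ i, x i) ≠ (k : ℝ) →
      (1 / 2) * (xstar ⬝ᵥ A.mulVec xstar) <
        (1 / 2) * (x ⬝ᵥ A.mulVec x) + lam * ((k : ℝ) - ∑ i, x i) +
          μ / 2 * ((∑ i, x i) - k) ^ 2 := by
    intro x hxbin hxne
    set S : Finset (Fin n) := Finset.univ.filter (fun i => x i = 1) with hSdef
    have hxS := binary_support x hxbin
    have hquad : x ⬝ᵥ A.mulVec x = Qf A S := quad_eq A x S hxS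
    have hsum : (∑ i, x i) = (S.card : ℝ) := by
      rw [Finset.sum_congr rfl (fun i _ => hxS i), Finset.sum_ite_mem]
      simp
      rfl
    have hcne : S.card ≠ k := by
      intro h; apply hxne; rw [hsum, h]
    rw [hquad, hsum]
    rw [hsum] at hxne
    rcases lt_or_gt_of_ne hcne with hlt | hgt
    · -- S.card < k : extend
      obtain ⟨T, hTcard, hTQ⟩ := Qf_extend A h01 hdiag hsymm (k - S.card) S k hk (by omega)
      have hopt' := hopt T hTcard
      have hc1 : (S.card : ℝ) + 1 ≤ (k : ℝ) := by exact_mod_cast hlt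
      have hc0 : (0 : ℝ) ≤ (S.card : ℝ) := Nat.cast_nonneg _
      have hk1' : (1 : ℝ) ≤ (k : ℝ) := by exact_mod_cast hk1
      rw [hlam, hμ]
      nlinarith [hopt', hTQ, hc1, hc0, hk1',
        mul_nonneg (by linarith : (0:ℝ) ≤ (k:ℝ) - (S.card:ℝ) - 1) (by linarith : (0:ℝ) ≤ (k:ℝ) - 1),
        mul_nonneg (by linarith : (0:ℝ) ≤ (k:ℝ) - (S.card:ℝ) - 1) (by linarith : (0:ℝ) ≤ (k:ℝ) - (S.card:ℝ)),
        mul_pos (by linarith : (0:ℝ) < (k:ℝ) - (S.card:ℝ)) (by linarith : (0:ℝ) < (k:ℝ) - (S.card:ℝ))]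
    · -- S.card > k : shrink
      obtain ⟨T, hTsub, hTcard⟩ := Finset.exists_subset_card_eq (s := S) (n := k) (by omega)
      have hopt' := hopt T hTcard
      have hmono := Qf_mono A h01 hTsub
      have hc1 : (k : ℝ) + 1 ≤ (S.card : ℝ) := by exact_mod_cast hgt
      have hk1' : (1 : ℝ) ≤ (k : ℝ) := by exact_mod_cast hk1
      rw [hlam, hμ]
      nlinarith [hopt', hmono, hc1, hk1',
        mul_nonneg (by linarith : (0:ℝ) ≤ (S.card:ℝ) - (k:ℝ) - 1) (by linarith : (0:ℝ) ≤ (k:ℝ)),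
        mul_pos (by linarith : (0:ℝ) < (S.card:ℝ) - (k:ℝ)) (by linarith : (0:ℝ) < (S.card:ℝ) - (k:ℝ))]
  refine ⟨part1, ?_⟩
  intro y hybin hymin
  have hysum : (∑ i, y i) = (k : ℝ) := by
    by_contra hne
    have h1 := part1 y hybin hne
    have h2 := hymin xstar hxstar
    rw [hxstarcard] at h2
    simp only [sub_self, ne_eq] at h2
    have h2' : (1 / 2) * (y ⬝ᵥ A.mulVec y) + lam * ((k : ℝ) - ∑ i, y i) +
        μ / 2 * ((∑ i, y i) - k) ^ 2 ≤ (1 / 2) * (xstar ⬝ᵥ A.mulVec xstar) := by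
      calc _ ≤ _ := h2
        _ = (1 / 2) * (xstar ⬝ᵥ A.mulVec xstar) := by ring
    linarith
  refine ⟨hysum, ?_⟩
  intro x hxbin hxsum
  have h2 := hymin x hxbin
  rw [hysum, hxsum] at h2
  have : (1 / 2) * (y ⬝ᵥ A.mulVec y) + lam * 0 + μ / 2 * 0 ^ 2 ≤
      (1 / 2) * (x ⬝ᵥ A.mulVec x) + lam * 0 + μ / 2 * 0 ^ 2 := by
    simpa using h2
  linarith
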